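/- Let u, v ∈ ℂ. There exists γ ∈ ℂ such that 𝔭_u + γ·𝔮_v ∈ D(T) if and only if B(u,v) = 0, and in the affirmative case γ is uniquely determined and equals −D(u,v). In particular 𝔭_u + γ·𝔮_u ∉ D(T) for all u, γ ∈ ℂ. -/

import Mathlib

open Filter Topology MeasureTheory

noncomputable section

/-- Action of the Jacobi matrix `J` on a complex sequence:
`(Jc)ₙ = aₙ₋₁cₙ₋₁ + bₙcₙ + aₙcₙ₊₁` with `a₋₁ := 0`. -/
def jacobiMul (a b : ℕ → ℝ) (c : ℕ → ℂ) : ℕ → ℂ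
  | 0 => (b 0 : ℂ) * c 0 + (a 0 : ℂ) * c 1
  | n + 1 => (a n : ℂ) * c n + (b (n + 1) : ℂ) * c (n + 1) + (a (n + 1) : ℂ) * c (n + 2)

/-- `jacobiGraph a b f g` means: `f` belongs to the domain `D(T)` of the closure `T` of the
Jacobi matrix acting on the finitely supported sequences, and `T f = g`; i.e. there are
finitely supported sequences `u k → f` in `ℓ²` such that `J (u k) → g` in `ℓ²`. -/
def jacobiGraph (a b : ℕ → ℝ) (f g : ℕ → ℂ) : Prop :=
  ∃ u : ℕ → ℕ → ℂ,
    (∀ k, (Function.support (u k)).Finite) ∧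
    (∀ k, Summable fun n => ‖u k n - f n‖ ^ 2) ∧
    Tendsto (fun k => ∑' n, ‖u k n - f n‖ ^ 2) atTop (𝓝 0) ∧
    (∀ k, Summable fun n => ‖jacobiMul a b (u k) n - g n‖ ^ 2) ∧
    Tendsto (fun k => ∑' n, ‖jacobiMul a b (u k) n - g n‖ ^ 2) atTop (𝓝 0)

/-- Membership in the domain `D(T)` of the Jacobi operator. -/
def inDomT (a b : ℕ → ℝ) (f : ℕ → ℂ) : Prop := ∃ g, jacobiGraph a b f g

/-- The `ℓ²` norm of a complex sequence. -/
def l2norm (f : ℕ → ℂ) : ℝ := Real.sqrt (∑' n, ‖f n‖ ^ 2)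

/-- The data of an indeterminate Hamburger moment problem: Jacobi parameters `a`, `b`,
the orthonormal polynomials `p` and second-kind polynomials `q` (as entire functions),
determined by the three-term recurrence, together with the indeterminacy condition
`∑ₙ (|pₙ(z)|² + |qₙ(z)|²) < ∞` for all `z`. -/
structure JacobiSetup where
  a : ℕ → ℝ
  b : ℕ → ℝ
  ha : ∀ n, 0 < a n
  p : ℕ → ℂ → ℂ
  q : ℕ → ℂ → ℂ
  hp0 : ∀ z, p 0 z = 1
  hp1 : ∀ z, p 1 z = (z - (b 0 : ℂ)) / (a 0 : ℂ)
  hq0 : ∀ z, q 0 z = 0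
  hq1 : ∀ z, q 1 z = 1 / (a 0 : ℂ)
  hrecp : ∀ n z, z * p (n + 1) z =
    (a (n + 1) : ℂ) * p (n + 2) z + (b (n + 1) : ℂ) * p (n + 1) z + (a n : ℂ) * p n z
  hrecq : ∀ n z, z * q (n + 1) z =
    (a (n + 1) : ℂ) * q (n + 2) z + (b (n + 1) : ℂ) * q (n + 1) z + (a n : ℂ) * q n z
  indet : ∀ z : ℂ, Summable fun n => ‖p n z‖ ^ 2 + ‖q n z‖ ^ 2

/-- The Nevanlinna function `A(u,v)`. -/
def nevA (S : JacobiSetup) (u v : ℂ) : ℂ := (u - v) * ∑' k, S.q k u * S.q k v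
/-- The Nevanlinna function `B(u,v)`. -/
def nevB (S : JacobiSetup) (u v : ℂ) : ℂ := -1 + (u - v) * ∑' k, S.p k u * S.q k v
/-- The Nevanlinna function `C(u,v)`. -/
def nevC (S : JacobiSetup) (u v : ℂ) : ℂ := 1 + (u - v) * ∑' k, S.q k u * S.p k v
/-- The Nevanlinna function `D(u,v)`. -/
def nevD (S : JacobiSetup) (u v : ℂ) : ℂ := (u - v) * ∑' k, S.p k u * S.p k v

/- ===== auxiliary lemmas ===== -/

section Aux

lemma green (a b : ℕ → ℝ) (c h : ℕ → ℂ) (m : ℕ) :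
    ∑ n ∈ Finset.range (m + 1), (jacobiMul a b c n * h n - c n * jacobiMul a b h n)
      = (a m : ℂ) * (c (m + 1) * h m - c m * h (m + 1)) := by
  induction m with
  | zero => simp [jacobiMul]; ring
  | succ m ih =>
      rw [Finset.sum_range_succ, ih]
      show _ + (jacobiMul a b c (m+1) * h (m+1) - c (m+1) * jacobiMul a b h (m+1)) = _
      simp only [jacobiMul]
      ring

lemma jacobiMul_add (a b : ℕ → ℝ) (x y : ℕ → ℂ) (γ : ℂ) (n : ℕ) :
    jacobiMul a b (fun m => x m + γ * y m) n = jacobiMul a b x n + γ * jacobiMul a b y n := by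
  cases n <;> simp [jacobiMul] <;> ring

lemma support_bound {c : ℕ → ℂ} (hc : (Function.support c).Finite) :
    ∃ m, ∀ n, m ≤ n → c n = 0 := by
  obtain ⟨M, hM⟩ := hc.bddAbove
  refine ⟨M + 1, fun n hn => ?_⟩
  by_contra h
  have := hM (Function.mem_support.mpr h)
  omega

lemma jac_support {a b : ℕ → ℝ} {c : ℕ → ℂ} {m : ℕ} (hc : ∀ n, m ≤ n → c n = 0) :
    ∀ n, m + 1 ≤ n → jacobiMul a b c n = 0 := by
  intro n hn
  match n, hn with
  | (t + 1), hn =>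
    show (a t : ℂ) * c t + _ * c (t + 1) + _ * c (t + 2) = 0
    rw [hc t (by omega), hc (t+1) (by omega), hc (t+2) (by omega)]
    ring

lemma green_tsum (a b : ℕ → ℝ) (c h : ℕ → ℂ) (hc : (Function.support c).Finite) :
    ∑' n, jacobiMul a b c n * h n = ∑' n, c n * jacobiMul a b h n := by
  obtain ⟨m, hm⟩ := support_bound hc
  have hjc := jac_support (a := a) (b := b) hm
  rw [tsum_eq_sum (s := Finset.range (m + 2))
    (by intro n hn; simp only [Finset.mem_range, not_lt] at hn; rw [hjc n (by omega)]; ring),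
    tsum_eq_sum (s := Finset.range (m + 2))
    (by intro n hn; simp only [Finset.mem_range, not_lt] at hn; rw [hm n (by omega)]; ring)]
  have hg := green a b c h (m + 1)
  rw [Finset.sum_sub_distrib, hm (m+1) (by omega), hm (m+2) (by omega)] at hg
  simp only [zero_mul, mul_zero, sub_zero, zero_sub, mul_neg, neg_zero] at hg
  have h2 : (m + 1) + 1 = m + 2 := rfl
  rw [h2] at hg
  linear_combination hg

lemma l2_of_finite_support {c : ℕ → ℂ} (hc : (Function.support c).Finite) :
    Summable fun n => ‖c n‖ ^ 2 := by
  obtain ⟨m, hm⟩ := support_bound hc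
  apply summable_of_ne_finset_zero (s := Finset.range m)
  intro n hn
  simp only [Finset.mem_range, not_lt] at hn
  rw [hm n hn]
  simp

lemma l2_diff {x y : ℕ → ℂ} (hx : Summable fun n => ‖x n‖ ^ 2)
    (hd : Summable fun n => ‖x n - y n‖ ^ 2) : Summable fun n => ‖y n‖ ^ 2 := by
  have hg : Summable fun n => 2 * ‖x n‖ ^ 2 + 2 * ‖x n - y n‖ ^ 2 :=
    ((hx.mul_left 2).add (hd.mul_left 2))
  refine Summable.of_nonneg_of_le (fun n => sq_nonneg _) (fun n => ?_) hg
  have h1 : ‖y n‖ ≤ ‖x n‖ + ‖x n - y n‖ := by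
    calc ‖y n‖ = ‖x n - (x n - y n)‖ := by ring_nf
      _ ≤ ‖x n‖ + ‖x n - y n‖ := norm_sub_le _ _
  have h2 := pow_le_pow_left₀ (norm_nonneg (y n)) h1 2
  nlinarith [sq_nonneg (‖x n‖ - ‖x n - y n‖)]

lemma l2_combo {x y : ℕ → ℂ} (hx : Summable fun n => ‖x n‖ ^ 2)
    (hy : Summable fun n => ‖y n‖ ^ 2) (γ : ℂ) :
    Summable fun n => ‖x n + γ * y n‖ ^ 2 := by
  have hg : Summable fun n => 2 * ‖x n‖ ^ 2 + 2 * ‖γ‖ ^ 2 * ‖y n‖ ^ 2 :=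
    ((hx.mul_left 2).add (hy.mul_left (2 * ‖γ‖ ^ 2))).congr (by intro n; ring)
  refine Summable.of_nonneg_of_le (fun n => sq_nonneg _) (fun n => ?_) hg
  have h1 : ‖x n + γ * y n‖ ≤ ‖x n‖ + ‖γ‖ * ‖y n‖ := by
    calc ‖x n + γ * y n‖ ≤ ‖x n‖ + ‖γ * y n‖ := norm_add_le _ _
      _ = ‖x n‖ + ‖γ‖ * ‖y n‖ := by rw [norm_mul]
  have h2 := pow_le_pow_left₀ (norm_nonneg (x n + γ * y n)) h1 2
  nlinarith [sq_nonneg (‖x n‖ - ‖γ‖ * ‖y n‖)]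

lemma normProdSummable {x y : ℕ → ℂ} (hx : Summable fun n => ‖x n‖ ^ 2)
    (hy : Summable fun n => ‖y n‖ ^ 2) : Summable fun n => ‖x n‖ * ‖y n‖ := by
  have hg : Summable fun n => (‖x n‖ ^ 2 + ‖y n‖ ^ 2) / 2 := (hx.add hy).div_const 2
  refine Summable.of_nonneg_of_le (fun n => mul_nonneg (norm_nonneg _) (norm_nonneg _)) ?_ hg
  intro n
  nlinarith [sq_nonneg (‖x n‖ - ‖y n‖)]

lemma prodSummable {x y : ℕ → ℂ} (hx : Summable fun n => ‖x n‖ ^ 2)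
    (hy : Summable fun n => ‖y n‖ ^ 2) : Summable fun n => x n * y n := by
  apply Summable.of_norm
  simpa [norm_mul] using normProdSummable hx hy

lemma tsum_cs {x y : ℕ → ℂ} (hx : Summable fun n => ‖x n‖ ^ 2)
    (hy : Summable fun n => ‖y n‖ ^ 2) :
    ‖∑' n, x n * y n‖ ≤
      Real.sqrt (∑' n, ‖x n‖ ^ 2) * Real.sqrt (∑' n, ‖y n‖ ^ 2) := by
  refine le_trans (norm_tsum_le_tsum_norm ?_) ?_
  · simpa [norm_mul] using normProdSummable hx hy
  simp only [norm_mul]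
  apply Summable.tsum_le_of_sum_le (normProdSummable hx hy)
  intro s
  have h1 : (∑ n ∈ s, ‖x n‖ * ‖y n‖) ^ 2 ≤ (∑ n ∈ s, ‖x n‖ ^ 2) * ∑ n ∈ s, ‖y n‖ ^ 2 :=
    Finset.sum_mul_sq_le_sq_mul_sq s _ _
  have h2 : (∑ n ∈ s, ‖x n‖ ^ 2) * ∑ n ∈ s, ‖y n‖ ^ 2
      ≤ (∑' n, ‖x n‖ ^ 2) * ∑' n, ‖y n‖ ^ 2 :=
    mul_le_mul (Summable.sum_le_tsum s (fun n _ => sq_nonneg _) hx)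
      (Summable.sum_le_tsum s (fun n _ => sq_nonneg _) hy)
      (Finset.sum_nonneg fun n _ => sq_nonneg _)
      (tsum_nonneg fun n => sq_nonneg _)
  calc (∑ n ∈ s, ‖x n‖ * ‖y n‖)
      = Real.sqrt ((∑ n ∈ s, ‖x n‖ * ‖y n‖) ^ 2) := by
        rw [Real.sqrt_sq (Finset.sum_nonneg fun n _ => mul_nonneg (norm_nonneg _) (norm_nonneg _))]
    _ ≤ Real.sqrt ((∑' n, ‖x n‖ ^ 2) * ∑' n, ‖y n‖ ^ 2) :=
        Real.sqrt_le_sqrt (le_trans h1 h2)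
    _ = _ := Real.sqrt_mul (tsum_nonneg fun n => sq_nonneg _) _

lemma pairing_tendsto {xk : ℕ → ℕ → ℂ} {x y : ℕ → ℂ}
    (hx : Summable fun n => ‖x n‖ ^ 2) (hy : Summable fun n => ‖y n‖ ^ 2)
    (hd : ∀ k, Summable fun n => ‖xk k n - x n‖ ^ 2)
    (ht : Tendsto (fun k => ∑' n, ‖xk k n - x n‖ ^ 2) atTop (𝓝 0)) :
    Tendsto (fun k => ∑' n, xk k n * y n) atTop (𝓝 (∑' n, x n * y n)) := by
  have hsplit : ∀ k, (∑' n, xk k n * y n)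
      = (∑' n, (xk k n - x n) * y n) + ∑' n, x n * y n := by
    intro k
    rw [← Summable.tsum_add (prodSummable (hd k) hy) (prodSummable hx hy)]
    congr 1; ext n; ring
  simp only [hsplit]
  have h0 : Tendsto (fun k => ∑' n, (xk k n - x n) * y n) atTop (𝓝 0) := by
    apply squeeze_zero_norm (fun k => tsum_cs (hd k) hy)
    have hs : Tendsto (fun k => Real.sqrt (∑' n, ‖xk k n - x n‖ ^ 2)) atTop (𝓝 0) := by
      have := (Real.continuous_sqrt.tendsto 0).comp ht
      simpa [Function.comp_def] using this
    simpa using hs.mul_const (Real.sqrt (∑' n, ‖y n‖ ^ 2))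
  simpa using h0.add_const (∑' n, x n * y n)

lemma pointwise_tendsto {xk : ℕ → ℕ → ℂ} {x : ℕ → ℂ}
    (hd : ∀ k, Summable fun n => ‖xk k n - x n‖ ^ 2)
    (ht : Tendsto (fun k => ∑' n, ‖xk k n - x n‖ ^ 2) atTop (𝓝 0)) (n : ℕ) :
    Tendsto (fun k => xk k n) atTop (𝓝 (x n)) := by
  rw [tendsto_iff_norm_sub_tendsto_zero]
  apply squeeze_zero (fun k => norm_nonneg _)
    (g := fun k => Real.sqrt (∑' m, ‖xk k m - x m‖ ^ 2))
  · intro k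
    have h1 : ‖xk k n - x n‖ ^ 2 ≤ ∑' m, ‖xk k m - x m‖ ^ 2 :=
      Summable.le_tsum (hd k) n (fun m _ => sq_nonneg _)
    have := Real.sqrt_le_sqrt h1
    rwa [Real.sqrt_sq (norm_nonneg _)] at this
  · have := (Real.continuous_sqrt.tendsto 0).comp ht
    simpa [Function.comp_def] using this

lemma jacobiMul_combo (a b : ℕ → ℝ) (x y z : ℕ → ℂ) (c1 c2 : ℂ) (n : ℕ) :
    jacobiMul a b (fun m => x m - c1 * y m - c2 * z m) n
      = jacobiMul a b x n - c1 * jacobiMul a b y n - c2 * jacobiMul a b z n := by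
  cases n <;> simp [jacobiMul] <;> ring

lemma l2_scale {x : ℕ → ℂ} (hx : Summable fun n => ‖x n‖ ^ 2) (c : ℂ) :
    Summable fun n => ‖c * x n‖ ^ 2 :=
  (hx.mul_left (‖c‖ ^ 2)).congr (by intro n; rw [norm_mul]; ring)

lemma l2_combo2 {x y : ℕ → ℂ} (hx : Summable fun n => ‖x n‖ ^ 2)
    (hy : Summable fun n => ‖y n‖ ^ 2) (c1 c2 : ℂ) :
    Summable fun n => ‖c1 * x n + c2 * y n‖ ^ 2 := by
  have h := (l2_scale hx c1)
  have h2 : Summable fun n => ‖c1 * x n + c2 * y n‖ ^ 2 := by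
    have := h
    -- reuse shape: ‖(c1*x) + c2 * y‖²
    have hg : Summable fun n => 2 * ‖c1 * x n‖ ^ 2 + 2 * ‖c2 * y n‖ ^ 2 :=
      ((h.mul_left 2).add ((l2_scale hy c2).mul_left 2))
    refine Summable.of_nonneg_of_le (fun n => sq_nonneg _) (fun n => ?_) hg
    have h1 : ‖c1 * x n + c2 * y n‖ ≤ ‖c1 * x n‖ + ‖c2 * y n‖ := norm_add_le _ _
    have h2 := pow_le_pow_left₀ (norm_nonneg _) h1 2
    nlinarith [sq_nonneg (‖c1 * x n‖ - ‖c2 * y n‖)]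
  exact h2

lemma tsum_combo_le {x y : ℕ → ℂ} (hx : Summable fun n => ‖x n‖ ^ 2)
    (hy : Summable fun n => ‖y n‖ ^ 2) (c1 c2 : ℂ) :
    ∑' n, ‖c1 * x n + c2 * y n‖ ^ 2
      ≤ 2 * ‖c1‖ ^ 2 * (∑' n, ‖x n‖ ^ 2) + 2 * ‖c2‖ ^ 2 * (∑' n, ‖y n‖ ^ 2) := by
  have hrhs : Summable fun n => 2 * ‖c1‖ ^ 2 * ‖x n‖ ^ 2 + 2 * ‖c2‖ ^ 2 * ‖y n‖ ^ 2 :=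
    (hx.mul_left _).add (hy.mul_left _)
  have h1 := Summable.tsum_le_tsum (f := fun n => ‖c1 * x n + c2 * y n‖ ^ 2)
    (g := fun n => 2 * ‖c1‖ ^ 2 * ‖x n‖ ^ 2 + 2 * ‖c2‖ ^ 2 * ‖y n‖ ^ 2) ?_
    (l2_combo2 hx hy c1 c2) hrhs
  · rw [Summable.tsum_add (hx.mul_left _) (hy.mul_left _), tsum_mul_left, tsum_mul_left] at h1
    exact h1
  · intro n
    show ‖c1 * x n + c2 * y n‖ ^ 2 ≤ 2 * ‖c1‖ ^ 2 * ‖x n‖ ^ 2 + 2 * ‖c2‖ ^ 2 * ‖y n‖ ^ 2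
    have hle : ‖c1 * x n + c2 * y n‖ ≤ ‖c1‖ * ‖x n‖ + ‖c2‖ * ‖y n‖ := by
      refine le_trans (norm_add_le _ _) ?_
      rw [norm_mul, norm_mul]
    have h2 := pow_le_pow_left₀ (norm_nonneg _) hle 2
    nlinarith [sq_nonneg (‖c1‖ * ‖x n‖ - ‖c2‖ * ‖y n‖)]

lemma tail_tsum_eq {f : ℕ → ℂ} (hf : Summable fun n => ‖f n‖ ^ 2) (j : ℕ) :
    ∑' n, (if j ≤ n then ‖f n‖ ^ 2 else 0) = ∑' m, ‖f (m + j)‖ ^ 2 := by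
  have hs : Summable fun n => (if j ≤ n then ‖f n‖ ^ 2 else 0) :=
    hf.of_nonneg_of_le (fun n => by positivity)
      (fun n => by split <;> simp [sq_nonneg])
  have h := Summable.sum_add_tsum_nat_add (f := fun n => (if j ≤ n then ‖f n‖ ^ 2 else 0)) j hs
  have h0 : ∑ i ∈ Finset.range j, (if j ≤ i then ‖f i‖ ^ 2 else 0) = 0 := by
    apply Finset.sum_eq_zero
    intro i hi
    simp only [Finset.mem_range] at hi
    rw [if_neg (by omega)]
  have h1 : ∀ m, (if j ≤ m + j then ‖f (m + j)‖ ^ 2 else 0) = ‖f (m + j)‖ ^ 2 := by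
    intro m; rw [if_pos (by omega)]
  rw [h0, zero_add] at h
  calc ∑' n, (if j ≤ n then ‖f n‖ ^ 2 else 0)
      = ∑' m, (if j ≤ m + j then ‖f (m + j)‖ ^ 2 else 0) := h.symm
    _ = ∑' m, ‖f (m + j)‖ ^ 2 := tsum_congr h1

lemma tail_tendsto {f : ℕ → ℂ} (hf : Summable fun n => ‖f n‖ ^ 2) :
    Tendsto (fun k => ∑' n, (if k ≤ n then ‖f n‖ ^ 2 else 0)) atTop (𝓝 0) := by
  have he : (fun k => ∑' n, (if k ≤ n then ‖f n‖ ^ 2 else 0))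
      = fun k => ∑' m, ‖f (m + k)‖ ^ 2 := funext fun k => tail_tsum_eq hf k
  rw [he]
  exact tendsto_sum_nat_add (fun n => ‖f n‖ ^ 2)

def e0 : ℕ → ℂ := fun n => if n = 0 then 1 else 0

lemma e0_l2 : Summable fun n => ‖e0 n‖ ^ 2 := by
  apply summable_of_ne_finset_zero (s := {0})
  intro n hn
  simp only [Finset.mem_singleton] at hn
  simp [e0, hn]

lemma tsum_combo_mul {x y h : ℕ → ℂ} (hx : Summable fun n => ‖x n‖ ^ 2)
    (hy : Summable fun n => ‖y n‖ ^ 2) (hh : Summable fun n => ‖h n‖ ^ 2)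
    (cx cy ce : ℂ) :
    ∑' n, (cx * x n + cy * y n + ce * e0 n) * h n
      = cx * (∑' n, x n * h n) + cy * (∑' n, y n * h n) + ce * h 0 := by
  have h1 : ∀ n, (cx * x n + cy * y n + ce * e0 n) * h n
      = cx * (x n * h n) + cy * (y n * h n) + (if n = 0 then ce * h 0 else 0) := by
    intro n
    by_cases hn : n = 0
    · subst hn; simp [e0]; ring
    · simp [e0, hn]; ring
  rw [tsum_congr h1]
  have s1 : Summable fun n => cx * (x n * h n) := (prodSummable hx hh).mul_left cx
  have s2 : Summable fun n => cy * (y n * h n) := (prodSummable hy hh).mul_left cy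
  have s3 : Summable fun n => (if n = 0 then ce * h 0 else (0:ℂ)) := by
    apply summable_of_ne_finset_zero (s := {0})
    intro n hn
    simp only [Finset.mem_singleton] at hn
    simp [hn]
  have e3 : ∑' n, (if n = 0 then ce * h 0 else (0:ℂ)) = ce * h 0 :=
    tsum_eq_single 0 (fun b hb => by simp [hb])
  rw [Summable.tsum_add (s1.add s2) s3, Summable.tsum_add s1 s2, e3, tsum_mul_left, tsum_mul_left]

variable (S : JacobiSetup)

lemma ha0 (n : ℕ) : (S.a n : ℂ) ≠ 0 := by
  exact_mod_cast Complex.ofReal_ne_zero.mpr (ne_of_gt (S.ha n))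

lemma Psum (z : ℂ) : Summable fun n => ‖S.p n z‖ ^ 2 :=
  (S.indet z).of_nonneg_of_le (fun _ => sq_nonneg _)
    (fun _ => le_add_of_nonneg_right (sq_nonneg _))

lemma Qsum (z : ℂ) : Summable fun n => ‖S.q n z‖ ^ 2 :=
  (S.indet z).of_nonneg_of_le (fun _ => sq_nonneg _)
    (fun _ => le_add_of_nonneg_left (sq_nonneg _))

lemma jacP (z : ℂ) (n : ℕ) : jacobiMul S.a S.b (fun m => S.p m z) n = z * S.p n z := by
  cases n with
  | zero =>
      show (S.b 0 : ℂ) * S.p 0 z + (S.a 0 : ℂ) * S.p 1 z = z * S.p 0 z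
      rw [S.hp0, S.hp1]
      field_simp [ha0 S 0]
      ring
  | succ n =>
      show (S.a n : ℂ) * S.p n z + (S.b (n+1) : ℂ) * S.p (n+1) z + (S.a (n+1) : ℂ) * S.p (n+2) z
        = z * S.p (n+1) z
      rw [S.hrecp n z]; ring

lemma jacQ (z : ℂ) (n : ℕ) :
    jacobiMul S.a S.b (fun m => S.q m z) n = z * S.q n z + e0 n := by
  cases n with
  | zero =>
      show (S.b 0 : ℂ) * S.q 0 z + (S.a 0 : ℂ) * S.q 1 z = z * S.q 0 z + e0 0
      rw [S.hq0, S.hq1]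
      simp [e0]
      field_simp [ha0 S 0]
  | succ n =>
      show (S.a n : ℂ) * S.q n z + (S.b (n+1) : ℂ) * S.q (n+1) z + (S.a (n+1) : ℂ) * S.q (n+2) z
        = z * S.q (n+1) z + e0 (n+1)
      rw [S.hrecq n z]; simp [e0]; ring

lemma aux_fwd (u v γ : ℂ)
    (hdom : inDomT S.a S.b fun n => S.p n u + γ * S.q n v) :
    (u - v) * (∑' n, S.p n u * S.q n v) = 1 ∧
    (u - v) * (∑' n, S.p n u * S.p n v) + γ = 0 := by
  obtain ⟨g, U, hfin, hS1, hT1, hS2, hT2⟩ := hdom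
  set f : ℕ → ℂ := fun n => S.p n u + γ * S.q n v with hfdef
  have hPu := Psum S u
  have hPv := Psum S v
  have hQv := Qsum S v
  have hf : Summable fun n => ‖f n‖ ^ 2 := l2_combo hPu (Qsum S v) γ
  have hJfin : ∀ k, (Function.support (jacobiMul S.a S.b (U k))).Finite := by
    intro k
    obtain ⟨m, hm⟩ := support_bound (hfin k)
    apply Set.Finite.subset (Set.finite_Iio (m + 1))
    intro n hn
    simp only [Set.mem_Iio]
    by_contra hc
    exact hn (jac_support hm n (by omega))
  have hg : Summable fun n => ‖g n‖ ^ 2 :=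
    l2_diff (l2_of_finite_support (hJfin 0)) (hS2 0)
  have hUpt := pointwise_tendsto hS1 hT1
  have hJpt := pointwise_tendsto hS2 hT2
  have hgJf : ∀ n, g n = jacobiMul S.a S.b f n := by
    intro n
    refine tendsto_nhds_unique (hJpt n) ?_
    cases n with
    | zero =>
        show Tendsto (fun k => jacobiMul S.a S.b (U k) 0) atTop (𝓝 (jacobiMul S.a S.b f 0))
        simp only [jacobiMul]
        exact (tendsto_const_nhds.mul (hUpt 0)).add (tendsto_const_nhds.mul (hUpt 1))
    | succ n =>
        show Tendsto (fun k => jacobiMul S.a S.b (U k) (n+1)) atTop (𝓝 (jacobiMul S.a S.b f (n+1)))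
        simp only [jacobiMul]
        exact ((tendsto_const_nhds.mul (hUpt n)).add
          (tendsto_const_nhds.mul (hUpt (n+1)))).add (tendsto_const_nhds.mul (hUpt (n+2)))
  have key : ∀ (h : ℕ → ℂ), (Summable fun n => ‖h n‖ ^ 2) → ∀ z c : ℂ,
      (∀ n, jacobiMul S.a S.b h n = z * h n + c * e0 n) →
      ∑' n, g n * h n = z * (∑' n, h n * f n) + c * f 0 := by
    intro h hh z c hJh
    have hy : Summable fun n => ‖jacobiMul S.a S.b h n‖ ^ 2 := by
      have h1 : Summable fun n => ‖z * h n + c * e0 n‖ ^ 2 := by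
        have hzh : Summable fun n => ‖z * h n‖ ^ 2 :=
          (hh.mul_left (‖z‖ ^ 2)).congr (by intro n; rw [norm_mul]; ring)
        exact l2_combo hzh e0_l2 c
      exact h1.congr (fun n => by rw [hJh n])
    have hL := pairing_tendsto (xk := fun k => jacobiMul S.a S.b (U k)) hg hh hS2 hT2
    have hR := pairing_tendsto (xk := U) hf hy hS1 hT1
    have hk : (fun k => ∑' n, jacobiMul S.a S.b (U k) n * h n)
        = fun k => ∑' n, U k n * jacobiMul S.a S.b h n :=
      funext fun k => green_tsum _ _ _ _ (hfin k)
    have heq : ∑' n, g n * h n = ∑' n, f n * jacobiMul S.a S.b h n :=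
      tendsto_nhds_unique (hk ▸ hL) hR
    rw [heq]
    have h2 : ∀ n, f n * jacobiMul S.a S.b h n = (z * h n + 0 * h n + c * e0 n) * f n := by
      intro n; rw [hJh n]; ring
    rw [tsum_congr h2, tsum_combo_mul hh hh hf z 0 c]
    ring
  have E1 := key (fun m => S.q m v) hQv v 1 (fun n => by rw [jacQ]; ring)
  have E2 := key (fun m => S.p m v) hPv v 0 (fun n => by rw [jacP]; ring)
  have hf0 : f 0 = 1 := by simp [hfdef, S.hp0, S.hq0]
  have hgn : ∀ n, g n = u * S.p n u + (γ * v) * S.q n v + γ * e0 n := by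
    intro n
    have hJf : jacobiMul S.a S.b f n
        = jacobiMul S.a S.b (fun m => S.p m u) n + γ * jacobiMul S.a S.b (fun m => S.q m v) n :=
      jacobiMul_add S.a S.b _ _ γ n
    rw [hgJf n, hJf, jacP, jacQ]
    ring
  have G1 : ∑' n, g n * S.q n v
      = u * (∑' n, S.p n u * S.q n v) + (γ * v) * (∑' n, S.q n v * S.q n v) + γ * S.q 0 v := by
    rw [tsum_congr (fun n => by rw [hgn n])]
    exact tsum_combo_mul hPu hQv hQv u (γ * v) γ
  have G2 : ∑' n, g n * S.p n v
      = u * (∑' n, S.p n u * S.p n v) + (γ * v) * (∑' n, S.q n v * S.p n v) + γ * S.p 0 v := by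
    rw [tsum_congr (fun n => by rw [hgn n])]
    exact tsum_combo_mul hPu hQv hPv u (γ * v) γ
  have F1 : ∑' n, S.q n v * f n
      = (∑' n, S.p n u * S.q n v) + γ * (∑' n, S.q n v * S.q n v) := by
    have h3 : ∀ n, S.q n v * f n = (1 * S.p n u + γ * S.q n v + 0 * e0 n) * S.q n v := by
      intro n; simp only [hfdef]; ring
    rw [tsum_congr h3, tsum_combo_mul hPu hQv hQv 1 γ 0]
    ring
  have F2 : ∑' n, S.p n v * f n
      = (∑' n, S.p n u * S.p n v) + γ * (∑' n, S.q n v * S.p n v) := by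
    have h3 : ∀ n, S.p n v * f n = (1 * S.p n u + γ * S.q n v + 0 * e0 n) * S.p n v := by
      intro n; simp only [hfdef]; ring
    rw [tsum_congr h3, tsum_combo_mul hPu hQv hPv 1 γ 0]
    ring
  rw [G1, F1, hf0, S.hq0] at E1
  rw [G2, F2, hf0, S.hp0] at E2
  constructor
  · linear_combination E1
  · linear_combination E2

lemma aux_rev (S : JacobiSetup) (u v γ : ℂ) (hB : nevB S u v = 0) (hγ : γ = -nevD S u v) :
    inDomT S.a S.b fun n => S.p n u + γ * S.q n v := by
  have hPu := Psum S u
  have hPv := Psum S v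
  have hQv := Qsum S v
  have hBB : (u - v) * (∑' n, S.p n u * S.q n v) = 1 := by
    have := hB; unfold nevB at this; linear_combination this
  have hD : (u - v) * (∑' n, S.p n u * S.p n v) + γ = 0 := by
    rw [hγ]; unfold nevD; ring
  set f : ℕ → ℂ := fun n => S.p n u + γ * S.q n v with hfdef
  have hf : Summable fun n => ‖f n‖ ^ 2 := l2_combo hPu hQv γ
  set g : ℕ → ℂ := fun n => u * S.p n u + (γ * v) * S.q n v + γ * e0 n with hgdef
  have hgJ : ∀ n, jacobiMul S.a S.b f n = g n := by
    intro n
    have h1 : jacobiMul S.a S.b f n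
        = jacobiMul S.a S.b (fun m => S.p m u) n + γ * jacobiMul S.a S.b (fun m => S.q m v) n :=
      jacobiMul_add S.a S.b _ _ γ n
    rw [h1, jacP, jacQ]; simp only [hgdef]; ring
  have hg2 : Summable fun n => ‖g n‖ ^ 2 := by
    have hx : Summable fun n => ‖u * S.p n u + (γ * v) * S.q n v‖ ^ 2 :=
      l2_combo2 hPu hQv u (γ * v)
    exact l2_combo hx e0_l2 γ
  -- Wronskian identity
  have hW : ∀ k, (S.a k : ℂ) * (S.p k v * S.q (k+1) v - S.p (k+1) v * S.q k v) = 1 := by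
    intro k
    have hgr := green S.a S.b (fun m => S.p m v) (fun m => S.q m v) k
    have hterm : ∀ n ∈ Finset.range (k+1),
        jacobiMul S.a S.b (fun m => S.p m v) n * S.q n v
          - S.p n v * jacobiMul S.a S.b (fun m => S.q m v) n
        = if n = 0 then -(S.p 0 v) else 0 := by
      intro n _
      rw [jacP, jacQ]
      by_cases hn : n = 0
      · subst hn; simp [e0]; ring
      · simp [e0, hn]; ring
    rw [Finset.sum_congr rfl hterm, Finset.sum_ite_eq' (Finset.range (k+1)) 0
      (fun _ => -(S.p 0 v)), if_pos (Finset.mem_range.mpr (by omega)), S.hp0] at hgr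
    linear_combination hgr
  -- the correction coefficients
  set β : ℕ → ℂ := fun k => (S.a k : ℂ) * (f (k+1) * S.p k v - f k * S.p (k+1) v) with hβ
  set α : ℕ → ℂ := fun k => -((S.a k : ℂ) * (f (k+1) * S.q k v - f k * S.q (k+1) v)) with hα
  set H : ℕ → ℕ → ℂ := fun k n => f n - α k * S.p n v - β k * S.q n v with hH
  have hHk : ∀ k, H k k = 0 := by
    intro k
    simp only [hH, hα, hβ]
    linear_combination (-(f k)) * hW k
  have hHk1 : ∀ k, H k (k+1) = 0 := by
    intro k
    simp only [hH, hα, hβ]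
    linear_combination (-(f (k+1))) * hW k
  -- partial-sum representations
  have hβeq : ∀ k, β k = (u - v) * (∑ n ∈ Finset.range (k+1), S.p n u * S.p n v) + γ := by
    intro k
    have hgr := green S.a S.b f (fun m => S.p m v) k
    have hterm : ∀ n ∈ Finset.range (k+1),
        jacobiMul S.a S.b f n * S.p n v - f n * jacobiMul S.a S.b (fun m => S.p m v) n
        = (u - v) * (S.p n u * S.p n v) + (if n = 0 then γ * S.p 0 v else 0) := by
      intro n _
      rw [hgJ n, jacP]
      by_cases hn : n = 0
      · subst hn; simp [hgdef, hfdef, e0]; ring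
      · simp [hgdef, hfdef, e0, hn]; ring
    rw [Finset.sum_congr rfl hterm, Finset.sum_add_distrib,
      Finset.sum_ite_eq' (Finset.range (k+1)) 0 (fun _ => γ * S.p 0 v),
      if_pos (Finset.mem_range.mpr (by omega)), S.hp0, ← Finset.mul_sum] at hgr
    simp only [hβ]
    linear_combination -hgr
  have hαeq : ∀ k, α k = -((u - v) * (∑ n ∈ Finset.range (k+1), S.p n u * S.q n v) - 1) := by
    intro k
    have hgr := green S.a S.b f (fun m => S.q m v) k
    have hterm : ∀ n ∈ Finset.range (k+1),
        jacobiMul S.a S.b f n * S.q n v - f n * jacobiMul S.a S.b (fun m => S.q m v) n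
        = (u - v) * (S.p n u * S.q n v) + (if n = 0 then γ * S.q 0 v - f 0 else 0) := by
      intro n _
      rw [hgJ n, jacQ]
      by_cases hn : n = 0
      · subst hn; simp [hgdef, hfdef, e0]; ring
      · simp [hgdef, hfdef, e0, hn]; ring
    rw [Finset.sum_congr rfl hterm, Finset.sum_add_distrib,
      Finset.sum_ite_eq' (Finset.range (k+1)) 0 (fun _ => γ * S.q 0 v - f 0),
      if_pos (Finset.mem_range.mpr (by omega)), S.hq0, ← Finset.mul_sum] at hgr
    have hf0 : f 0 = 1 := by simp [hfdef, S.hp0, S.hq0]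
    rw [hf0] at hgr
    simp only [hα]
    linear_combination hgr
  -- limits of α and β
  have hβlim : Tendsto β atTop (𝓝 0) := by
    have hps : Tendsto (fun k => ∑ n ∈ Finset.range (k+1), S.p n u * S.p n v) atTop
        (𝓝 (∑' n, S.p n u * S.p n v)) :=
      (prodSummable hPu hPv).hasSum.tendsto_sum_nat.comp (tendsto_add_atTop_nat 1)
    have h2 : Tendsto (fun k => (u - v) * (∑ n ∈ Finset.range (k+1), S.p n u * S.p n v) + γ)
        atTop (𝓝 ((u - v) * (∑' n, S.p n u * S.p n v) + γ)) :=
      (hps.const_mul (u - v)).add_const γ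
    rw [hD] at h2
    have he : β = fun k => (u - v) * (∑ n ∈ Finset.range (k+1), S.p n u * S.p n v) + γ :=
      funext hβeq
    rw [he]
    exact h2
  have hαlim : Tendsto α atTop (𝓝 0) := by
    have hps : Tendsto (fun k => ∑ n ∈ Finset.range (k+1), S.p n u * S.q n v) atTop
        (𝓝 (∑' n, S.p n u * S.q n v)) :=
      (prodSummable hPu hQv).hasSum.tendsto_sum_nat.comp (tendsto_add_atTop_nat 1)
    have h2 : Tendsto (fun k => -((u - v) * (∑ n ∈ Finset.range (k+1), S.p n u * S.q n v) - 1))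
        atTop (𝓝 (-((u - v) * (∑' n, S.p n u * S.q n v) - 1))) :=
      (((hps.const_mul (u - v)).sub_const 1).neg)
    rw [hBB] at h2
    simp only [sub_self, neg_zero] at h2
    have he : α = fun k => -((u - v) * (∑ n ∈ Finset.range (k+1), S.p n u * S.q n v) - 1) :=
      funext hαeq
    rw [he]
    exact h2
  have hαn : Tendsto (fun k => ‖α k‖ ^ 2) atTop (𝓝 0) := by
    have := (hαlim.norm).pow 2
    simpa using this
  have hβn : Tendsto (fun k => ‖β k‖ ^ 2) atTop (𝓝 0) := by
    have := (hβlim.norm).pow 2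
    simpa using this
  -- approximating sequences
  set U : ℕ → ℕ → ℂ := fun k n => if n ≤ k then H k n else 0 with hUdef
  have hUH : ∀ k n, n ≤ k + 1 → U k n = H k n := by
    intro k n hn
    by_cases h : n ≤ k
    · simp [hUdef, h]
    · have h2 : n = k + 1 := by omega
      simp only [hUdef, h2]
      rw [if_neg (by omega), hHk1 k]
  -- pointwise bounds for U - f
  have hUd : ∀ k n, ‖U k n - f n‖ ^ 2
      ≤ ‖α k * S.p n v + β k * S.q n v‖ ^ 2
        + (if k + 2 ≤ n then ‖f n‖ ^ 2 else 0) := by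
    intro k n
    by_cases h : n ≤ k + 1
    · rw [hUH k n h, if_neg (by omega), add_zero]
      have h3 : H k n - f n = -(α k * S.p n v + β k * S.q n v) := by
        simp only [hH]; ring
      rw [h3, norm_neg]
    · have hU0 : U k n = 0 := by
        simp only [hUdef]; rw [if_neg (by omega)]
      rw [hU0, if_pos (by omega), zero_sub, norm_neg]
      exact le_add_of_nonneg_left (sq_nonneg _)
  have hUsum : ∀ k, Summable fun n => ‖U k n - f n‖ ^ 2 := by
    intro k
    refine Summable.of_nonneg_of_le (fun n => sq_nonneg _) (hUd k) ?_
    refine (l2_combo2 hPv hQv (α k) (β k)).add ?_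
    exact hf.of_nonneg_of_le (fun n => by positivity) (fun n => by split <;> simp [sq_nonneg])
  have hUtend : Tendsto (fun k => ∑' n, ‖U k n - f n‖ ^ 2) atTop (𝓝 0) := by
    apply squeeze_zero (fun k => tsum_nonneg (fun n => sq_nonneg _))
      (g := fun k => (2 * ‖α k‖ ^ 2 * (∑' n, ‖S.p n v‖ ^ 2)
        + 2 * ‖β k‖ ^ 2 * (∑' n, ‖S.q n v‖ ^ 2))
        + ∑' n, (if k + 2 ≤ n then ‖f n‖ ^ 2 else 0))
    · intro k
      have hs1 : Summable fun n => ‖α k * S.p n v + β k * S.q n v‖ ^ 2 :=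
        l2_combo2 hPv hQv _ _
      have hs2 : Summable fun n => (if k + 2 ≤ n then ‖f n‖ ^ 2 else 0) :=
        hf.of_nonneg_of_le (fun n => by positivity) (fun n => by split <;> simp [sq_nonneg])
      calc ∑' n, ‖U k n - f n‖ ^ 2
          ≤ ∑' n, (‖α k * S.p n v + β k * S.q n v‖ ^ 2
              + (if k + 2 ≤ n then ‖f n‖ ^ 2 else 0)) :=
            Summable.tsum_le_tsum (hUd k) (hUsum k) (hs1.add hs2)
        _ = (∑' n, ‖α k * S.p n v + β k * S.q n v‖ ^ 2)
              + ∑' n, (if k + 2 ≤ n then ‖f n‖ ^ 2 else 0) := Summable.tsum_add hs1 hs2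
        _ ≤ (2 * ‖α k‖ ^ 2 * (∑' n, ‖S.p n v‖ ^ 2)
              + 2 * ‖β k‖ ^ 2 * (∑' n, ‖S.q n v‖ ^ 2))
              + ∑' n, (if k + 2 ≤ n then ‖f n‖ ^ 2 else 0) := by
            have := tsum_combo_le hPv hQv (α k) (β k)
            linarith
    · have h1 : Tendsto (fun k => 2 * ‖α k‖ ^ 2 * (∑' n, ‖S.p n v‖ ^ 2)) atTop (𝓝 0) := by
        have := (hαn.const_mul 2).mul_const (∑' n, ‖S.p n v‖ ^ 2)
        simpa using this
      have h2 : Tendsto (fun k => 2 * ‖β k‖ ^ 2 * (∑' n, ‖S.q n v‖ ^ 2)) atTop (𝓝 0) := by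
        have := (hβn.const_mul 2).mul_const (∑' n, ‖S.q n v‖ ^ 2)
        simpa using this
      have h3 : Tendsto (fun k => ∑' n, (if k + 2 ≤ n then ‖f n‖ ^ 2 else 0)) atTop (𝓝 0) :=
        (tail_tendsto hf).comp (tendsto_add_atTop_nat 2)
      have := (h1.add h2).add h3
      simpa using this
  -- jacobiMul of U
  have hJU : ∀ k n, jacobiMul S.a S.b (U k) n
      = if n ≤ k then jacobiMul S.a S.b (H k) n else 0 := by
    intro k n
    match n with
    | 0 =>
        rw [if_pos (by omega)]
        show (S.b 0 : ℂ) * U k 0 + (S.a 0 : ℂ) * U k 1 = _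
        rw [hUH k 0 (by omega), hUH k 1 (by omega)]
        rfl
    | (t + 1) =>
        by_cases h : t + 1 ≤ k
        · rw [if_pos h]
          show (S.a t : ℂ) * U k t + (S.b (t+1) : ℂ) * U k (t+1) + (S.a (t+1) : ℂ) * U k (t+2) = _
          rw [hUH k t (by omega), hUH k (t+1) (by omega), hUH k (t+2) (by omega)]
          rfl
        · rw [if_neg h]
          show (S.a t : ℂ) * U k t + (S.b (t+1) : ℂ) * U k (t+1) + (S.a (t+1) : ℂ) * U k (t+2) = 0
          by_cases h2 : t = k
          · have e00 : U k t = 0 := by rw [hUH k t (by omega), h2]; exact hHk k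
            have e1 : U k (t+1) = 0 := by simp only [hUdef]; rw [if_neg (by omega)]
            have e2 : U k (t+2) = 0 := by simp only [hUdef]; rw [if_neg (by omega)]
            rw [e00, e1, e2]; ring
          · have e0' : U k t = 0 := by simp only [hUdef]; rw [if_neg (by omega)]
            have e1 : U k (t+1) = 0 := by simp only [hUdef]; rw [if_neg (by omega)]
            have e2 : U k (t+2) = 0 := by simp only [hUdef]; rw [if_neg (by omega)]
            rw [e0', e1, e2]; ring
  have hJH : ∀ k n, jacobiMul S.a S.b (H k) n
      = g n - α k * (v * S.p n v) - β k * (v * S.q n v + e0 n) := by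
    intro k n
    have h1 : jacobiMul S.a S.b (H k) n
        = jacobiMul S.a S.b f n - α k * jacobiMul S.a S.b (fun m => S.p m v) n
          - β k * jacobiMul S.a S.b (fun m => S.q m v) n :=
      jacobiMul_combo S.a S.b f _ _ (α k) (β k) n
    rw [h1, hgJ n, jacP, jacQ]
  -- pointwise bounds for JU - g
  have hJUd : ∀ k n, ‖jacobiMul S.a S.b (U k) n - g n‖ ^ 2
      ≤ ‖α k * (v * S.p n v) + β k * (v * S.q n v + e0 n)‖ ^ 2
        + (if k + 1 ≤ n then ‖g n‖ ^ 2 else 0) := by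
    intro k n
    rw [hJU k n]
    by_cases h : n ≤ k
    · rw [if_pos h, hJH k n, if_neg (by omega), add_zero]
      have h3 : g n - α k * (v * S.p n v) - β k * (v * S.q n v + e0 n) - g n
          = -(α k * (v * S.p n v) + β k * (v * S.q n v + e0 n)) := by ring
      rw [h3, norm_neg]
    · rw [if_neg h, if_pos (by omega), zero_sub, norm_neg]
      exact le_add_of_nonneg_left (sq_nonneg _)
  have hvP : Summable fun n => ‖v * S.p n v‖ ^ 2 := l2_scale hPv v
  have hvQ : Summable fun n => ‖v * S.q n v + e0 n‖ ^ 2 :=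
    (l2_combo (l2_scale hQv v) e0_l2 1).congr (fun n => by rw [one_mul])
  have hJUsum : ∀ k, Summable fun n => ‖jacobiMul S.a S.b (U k) n - g n‖ ^ 2 := by
    intro k
    refine Summable.of_nonneg_of_le (fun n => sq_nonneg _) (hJUd k) ?_
    refine (l2_combo2 hvP hvQ (α k) (β k)).add ?_
    exact hg2.of_nonneg_of_le (fun n => by positivity) (fun n => by split <;> simp [sq_nonneg])
  have hJUtend : Tendsto (fun k => ∑' n, ‖jacobiMul S.a S.b (U k) n - g n‖ ^ 2) atTop (𝓝 0) := by
    apply squeeze_zero (fun k => tsum_nonneg (fun n => sq_nonneg _))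
      (g := fun k => (2 * ‖α k‖ ^ 2 * (∑' n, ‖v * S.p n v‖ ^ 2)
        + 2 * ‖β k‖ ^ 2 * (∑' n, ‖v * S.q n v + e0 n‖ ^ 2))
        + ∑' n, (if k + 1 ≤ n then ‖g n‖ ^ 2 else 0))
    · intro k
      have hs1 : Summable fun n => ‖α k * (v * S.p n v) + β k * (v * S.q n v + e0 n)‖ ^ 2 :=
        l2_combo2 hvP hvQ _ _
      have hs2 : Summable fun n => (if k + 1 ≤ n then ‖g n‖ ^ 2 else 0) :=
        hg2.of_nonneg_of_le (fun n => by positivity) (fun n => by split <;> simp [sq_nonneg])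
      calc ∑' n, ‖jacobiMul S.a S.b (U k) n - g n‖ ^ 2
          ≤ ∑' n, (‖α k * (v * S.p n v) + β k * (v * S.q n v + e0 n)‖ ^ 2
              + (if k + 1 ≤ n then ‖g n‖ ^ 2 else 0)) :=
            Summable.tsum_le_tsum (hJUd k) (hJUsum k) (hs1.add hs2)
        _ = (∑' n, ‖α k * (v * S.p n v) + β k * (v * S.q n v + e0 n)‖ ^ 2)
              + ∑' n, (if k + 1 ≤ n then ‖g n‖ ^ 2 else 0) := Summable.tsum_add hs1 hs2
        _ ≤ _ := by
            have := tsum_combo_le hvP hvQ (α k) (β k)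
            linarith
    · have h1 : Tendsto (fun k => 2 * ‖α k‖ ^ 2 * (∑' n, ‖v * S.p n v‖ ^ 2)) atTop (𝓝 0) := by
        have := (hαn.const_mul 2).mul_const (∑' n, ‖v * S.p n v‖ ^ 2)
        simpa using this
      have h2 : Tendsto (fun k => 2 * ‖β k‖ ^ 2 * (∑' n, ‖v * S.q n v + e0 n‖ ^ 2)) atTop (𝓝 0) := by
        have := (hβn.const_mul 2).mul_const (∑' n, ‖v * S.q n v + e0 n‖ ^ 2)
        simpa using this
      have h3 : Tendsto (fun k => ∑' n, (if k + 1 ≤ n then ‖g n‖ ^ 2 else 0)) atTop (𝓝 0) :=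
        (tail_tendsto hg2).comp (tendsto_add_atTop_nat 1)
      have := (h1.add h2).add h3
      simpa using this
  refine ⟨g, U, ?_, hUsum, hUtend, hJUsum, hJUtend⟩
  intro k
  apply Set.Finite.subset (Set.finite_Iio (k + 1))
  intro n hn
  simp only [Set.mem_Iio]
  by_contra hc
  apply hn
  show U k n = 0
  simp only [hUdef]
  rw [if_neg (by omega)]

end Aux

/-- There exists `γ` with `𝔭_u + γ 𝔮_v ∈ D(T)` iff `B(u,v) = 0`, and in the affirmative
case `γ` is unique and equals `−D(u,v)`.  In particular `𝔭_w + γ 𝔮_w ∉ D(T)` for all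
`w, γ ∈ ℂ`. -/
theorem stmt3 (S : JacobiSetup) (u v : ℂ) :
    ((∃ γ : ℂ, inDomT S.a S.b fun n => S.p n u + γ * S.q n v) ↔ nevB S u v = 0) ∧
    (∀ γ : ℂ, (inDomT S.a S.b fun n => S.p n u + γ * S.q n v) → γ = -nevD S u v) ∧
    ∀ w γ : ℂ, ¬ inDomT S.a S.b fun n => S.p n w + γ * S.q n w := by
  refine ⟨⟨?_, ?_⟩, ?_, ?_⟩
  · rintro ⟨γ, hγ⟩
    have h1 := (aux_fwd S u v γ hγ).1
    unfold nevB
    linear_combination h1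
  · intro hB
    exact ⟨-nevD S u v, aux_rev S u v (-nevD S u v) hB rfl⟩
  · intro γ hγ
    have h2 := (aux_fwd S u v γ hγ).2
    unfold nevD
    linear_combination h2
  · intro w γ hγ
    have h1 := (aux_fwd S w w γ hγ).1
    rw [sub_self, zero_mul] at h1
    exact zero_ne_one h1
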